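/- Let ρ be a density matrix and E, Π orthogonal projections on ℂⁿ, with Ẽ = I − E and N^s_x = G_s(x−1)·E + G_s(x)·Ẽ for s > 0. Then the post-selected pointer-position expectation satisfies ∫_{−∞}^{+∞} x · tr((N^s_x)† Π N^s_x ρ) dx = tr(Π E ρ E) + e^{−1/(4s²)} · Re tr(Π E ρ Ẽ). -/

import Mathlib

open MeasureTheory Matrix
open scoped ComplexOrder

/-- The Gaussian pointer wavefunction with spread `s`:
`G_s(x) = (π s²)^(−1/4) exp(−x²/(2 s²))`. -/
noncomputable def G (s x : ℝ) : ℝ :=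
  (Real.pi * s ^ 2) ^ (-(1 / 4 : ℝ)) * Real.exp (-x ^ 2 / (2 * s ^ 2))

/-- The Kraus operators of the Gaussian pointer measurement of the projection `E`
with pointer spread `s`: `N^s_x = G_s(x−1)·E + G_s(x)·(I − E)`. -/
noncomputable def Ns {n : ℕ} (E : Matrix (Fin n) (Fin n) ℂ) (s x : ℝ) :
    Matrix (Fin n) (Fin n) ℂ :=
  (G s (x - 1) : ℂ) • E + (G s x : ℂ) • (1 - E)

lemma gauss_odd (b : ℝ) : (∫ x : ℝ, x * Real.exp (-b * x ^ 2)) = 0 := by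
  have h := MeasureTheory.integral_neg_eq_self (fun x : ℝ => x * Real.exp (-b * x ^ 2)) volume
  simp only [neg_sq, neg_mul] at h
  rw [MeasureTheory.integral_neg] at h
  simp only [neg_mul]
  linarith

lemma gauss_shift (b c : ℝ) (hb : 0 < b) :
    (∫ x : ℝ, x * Real.exp (-b * (x - c) ^ 2)) = c * Real.sqrt (Real.pi / b) := by
  have shift : (∫ x : ℝ, x * Real.exp (-b * (x - c) ^ 2))
      = ∫ x : ℝ, (x + c) * Real.exp (-b * x ^ 2) := by
    rw [← MeasureTheory.integral_add_right_eq_self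
      (fun x : ℝ => x * Real.exp (-b * (x - c) ^ 2)) c]
    simp
  have h1 : Integrable fun x : ℝ => x * Real.exp (-b * x ^ 2) := integrable_mul_exp_neg_mul_sq hb
  have h2 : Integrable fun x : ℝ => c * Real.exp (-b * x ^ 2) :=
    (integrable_exp_neg_mul_sq hb).const_mul c
  have he : (fun x : ℝ => (x + c) * Real.exp (-b * x ^ 2))
      = fun x : ℝ => x * Real.exp (-b * x ^ 2) + c * Real.exp (-b * x ^ 2) := by
    funext x; ring
  rw [shift, he, MeasureTheory.integral_add h1 h2, gauss_odd, zero_add,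
    MeasureTheory.integral_const_mul, integral_gaussian]

lemma gauss_shift_integrable (b c : ℝ) (hb : 0 < b) :
    Integrable fun x : ℝ => x * Real.exp (-b * (x - c) ^ 2) := by
  have h : Integrable fun x : ℝ => (x + c) * Real.exp (-b * x ^ 2) := by
    have he : (fun x : ℝ => (x + c) * Real.exp (-b * x ^ 2))
        = fun x : ℝ => x * Real.exp (-b * x ^ 2) + c * Real.exp (-b * x ^ 2) := by
      funext x; ring
    rw [he]
    exact (integrable_mul_exp_neg_mul_sq hb).add ((integrable_exp_neg_mul_sq hb).const_mul c)
  have := h.comp_sub_right c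
  simpa using this

/-- For a density matrix `ρ`, orthogonal projections `E`, `P` and `s > 0`,
the post-selected pointer-position expectation satisfies
`∫ x · tr((N^s_x)† P N^s_x ρ) dx = tr(P E ρ E) + e^{−1/(4s²)} · Re tr(P E ρ Ẽ)`,
with `Ẽ = I − E`. -/
theorem postselected_pointer_expectation
    (n : ℕ) (ρ E P : Matrix (Fin n) (Fin n) ℂ)
    (hρ : ρ.PosSemidef) (hρtr : ρ.trace = 1)
    (hE : E.IsHermitian) (hE2 : E * E = E)
    (hP : P.IsHermitian) (hP2 : P * P = P)
    (s : ℝ) (hs : 0 < s) :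
    (∫ x : ℝ, (x : ℂ) * Matrix.trace ((Ns E s x)ᴴ * P * Ns E s x * ρ))
      = Matrix.trace (P * E * ρ * E)
        + (Real.exp (-1 / (4 * s ^ 2)) * (Matrix.trace (P * E * ρ * (1 - E))).re : ℝ) := by
  have hπs : 0 < Real.pi * s ^ 2 := by positivity
  have hsne : s ≠ 0 := ne_of_gt hs
  have hb : (0 : ℝ) < 1 / s ^ 2 := by positivity
  set C2 : ℝ := (Real.pi * s ^ 2) ^ (-(1 / 2) : ℝ) with hC2def
  have hGmul : ∀ u v : ℝ, G s u * G s v = C2 * Real.exp (-((u ^ 2 + v ^ 2) / (2 * s ^ 2))) := by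
    intro u v
    unfold G
    rw [mul_mul_mul_comm, ← Real.exp_add, ← Real.rpow_add hπs]
    congr 1
    · rw [hC2def]; norm_num
    · field_simp
      ring
  have hGsq1 : ∀ x : ℝ, G s (x - 1) * G s (x - 1)
      = C2 * Real.exp (-(1 / s ^ 2) * (x - 1) ^ 2) := by
    intro x; rw [hGmul]; congr 1; field_simp; ring
  have hGsq0 : ∀ x : ℝ, G s x * G s x = C2 * Real.exp (-(1 / s ^ 2) * x ^ 2) := by
    intro x; rw [hGmul]; congr 1; field_simp; ring
  have hGcross : ∀ x : ℝ, G s (x - 1) * G s x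
      = (C2 * Real.exp (-1 / (4 * s ^ 2))) * Real.exp (-(1 / s ^ 2) * (x - 1 / 2) ^ 2) := by
    intro x; rw [hGmul, mul_assoc, ← Real.exp_add]; congr 1; field_simp; ring
  have hC2 : C2 * Real.sqrt (Real.pi / (1 / s ^ 2)) = 1 := by
    rw [show Real.pi / (1 / s ^ 2) = Real.pi * s ^ 2 by field_simp,
      Real.sqrt_eq_rpow, hC2def, ← Real.rpow_add hπs]
    norm_num
  have hEH : Eᴴ = E := hE
  have hFH : (1 - E)ᴴ = (1 - E) := by rw [conjTranspose_sub, conjTranspose_one, hEH]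
  -- pointwise expansion of the integrand
  have key : ∀ x : ℝ, (x : ℂ) * Matrix.trace ((Ns E s x)ᴴ * P * Ns E s x * ρ)
      = (x * (G s (x - 1) * G s (x - 1))) • Matrix.trace (E * P * E * ρ)
        + (x * (G s (x - 1) * G s x)) •
            (Matrix.trace (E * P * (1 - E) * ρ) + Matrix.trace ((1 - E) * P * E * ρ))
        + (x * (G s x * G s x)) • Matrix.trace ((1 - E) * P * (1 - E) * ρ) := by
    intro x
    have hNsH : (Ns E s x)ᴴ = (G s (x - 1) : ℂ) • E + (G s x : ℂ) • (1 - E) := by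
      simp [Ns, conjTranspose_add, conjTranspose_smul, hEH, hFH, Complex.star_def,
        Complex.conj_ofReal]
    rw [hNsH]
    simp only [Ns, add_mul, mul_add, smul_mul_assoc, Matrix.mul_smul, trace_add, trace_smul,
      smul_smul, smul_eq_mul, Complex.real_smul]
    push_cast
    ring
  have i1 : Integrable (fun x : ℝ =>
      (x * (G s (x - 1) * G s (x - 1))) • Matrix.trace (E * P * E * ρ)) := by
    apply Integrable.smul_const
    have : (fun x : ℝ => x * (G s (x - 1) * G s (x - 1)))
        = fun x : ℝ => C2 * (x * Real.exp (-(1 / s ^ 2) * (x - 1) ^ 2)) := by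
      funext x; rw [hGsq1]; ring
    rw [this]
    exact (gauss_shift_integrable _ 1 hb).const_mul C2
  have i2 : Integrable (fun x : ℝ => (x * (G s (x - 1) * G s x)) •
      (Matrix.trace (E * P * (1 - E) * ρ) + Matrix.trace ((1 - E) * P * E * ρ))) := by
    apply Integrable.smul_const
    have : (fun x : ℝ => x * (G s (x - 1) * G s x))
        = fun x : ℝ => (C2 * Real.exp (-1 / (4 * s ^ 2)))
            * (x * Real.exp (-(1 / s ^ 2) * (x - 1 / 2) ^ 2)) := by
      funext x; rw [hGcross]; ring
    rw [this]
    exact (gauss_shift_integrable _ (1 / 2) hb).const_mul _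
  have i3 : Integrable (fun x : ℝ =>
      (x * (G s x * G s x)) • Matrix.trace ((1 - E) * P * (1 - E) * ρ)) := by
    apply Integrable.smul_const
    have : (fun x : ℝ => x * (G s x * G s x))
        = fun x : ℝ => C2 * (x * Real.exp (-(1 / s ^ 2) * x ^ 2)) := by
      funext x; rw [hGsq0]; ring
    rw [this]
    exact (integrable_mul_exp_neg_mul_sq hb).const_mul C2
  simp only [key]
  have i12 : Integrable (fun x : ℝ =>
      (x * (G s (x - 1) * G s (x - 1))) • Matrix.trace (E * P * E * ρ)
        + (x * (G s (x - 1) * G s x)) •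
            (Matrix.trace (E * P * (1 - E) * ρ) + Matrix.trace ((1 - E) * P * E * ρ))) :=
    i1.add i2
  rw [MeasureTheory.integral_add i12 i3, MeasureTheory.integral_add i1 i2,
    integral_smul_const, integral_smul_const, integral_smul_const]
  have e1 : (∫ x : ℝ, x * (G s (x - 1) * G s (x - 1))) = 1 := by
    have h : (fun x : ℝ => x * (G s (x - 1) * G s (x - 1)))
        = fun x : ℝ => C2 * (x * Real.exp (-(1 / s ^ 2) * (x - 1) ^ 2)) := by
      funext x; rw [hGsq1]; ring
    rw [h, MeasureTheory.integral_const_mul, gauss_shift _ _ hb, one_mul, hC2]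
  have e2 : (∫ x : ℝ, x * (G s (x - 1) * G s x)) = Real.exp (-1 / (4 * s ^ 2)) / 2 := by
    have h : (fun x : ℝ => x * (G s (x - 1) * G s x))
        = fun x : ℝ => (C2 * Real.exp (-1 / (4 * s ^ 2)))
            * (x * Real.exp (-(1 / s ^ 2) * (x - 1 / 2) ^ 2)) := by
      funext x; rw [hGcross]; ring
    rw [h, MeasureTheory.integral_const_mul, gauss_shift _ _ hb]
    rw [show C2 * Real.exp (-1 / (4 * s ^ 2)) * (1 / 2 * Real.sqrt (Real.pi / (1 / s ^ 2)))
      = (C2 * Real.sqrt (Real.pi / (1 / s ^ 2))) * (Real.exp (-1 / (4 * s ^ 2)) / 2) by ring,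
      hC2, one_mul]
  have e3 : (∫ x : ℝ, x * (G s x * G s x)) = 0 := by
    have h : (fun x : ℝ => x * (G s x * G s x))
        = fun x : ℝ => C2 * (x * Real.exp (-(1 / s ^ 2) * x ^ 2)) := by
      funext x; rw [hGsq0]; ring
    rw [h, MeasureTheory.integral_const_mul, gauss_odd, mul_zero]
  rw [e1, e2, e3, one_smul, zero_smul, add_zero]
  -- trace identities
  have ha : Matrix.trace (E * P * E * ρ) = Matrix.trace (P * E * ρ * E) := by
    rw [show E * P * E * ρ = E * (P * E * ρ) by simp [Matrix.mul_assoc],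
      Matrix.trace_mul_comm]
  have hc : Matrix.trace ((1 - E) * P * E * ρ) = Matrix.trace (P * E * ρ * (1 - E)) := by
    rw [show (1 - E) * P * E * ρ = (1 - E) * (P * E * ρ) by simp [Matrix.mul_assoc],
      Matrix.trace_mul_comm]
  have hb1 : Matrix.trace (E * P * (1 - E) * ρ)
      = star (Matrix.trace (P * E * ρ * (1 - E))) := by
    rw [← Matrix.trace_conjTranspose]
    have h1 : (P * E * ρ * (1 - E))ᴴ = ((1 - E) * ρ) * (E * P) := by
      simp only [conjTranspose_mul, hEH, hFH, hP.eq, hρ.1.eq]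
      simp [Matrix.mul_assoc]
    rw [h1, Matrix.trace_mul_cycle, Matrix.trace_mul_cycle]
  rw [ha, hc, hb1]
  set z : ℂ := Matrix.trace (P * E * ρ * (1 - E)) with hz
  have hzz : star z + z = ((2 * z.re : ℝ) : ℂ) := by
    rw [Complex.star_def, add_comm, Complex.add_conj]
  rw [hzz]
  rw [Complex.real_smul]
  push_cast
  ring
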